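/- arXiv:1508.04084 — 5 statements merged into one kernel-verified Lean document; each statement's English description precedes it below -/
import Mathlib

section
/- For all nonnegative integers m and n, ∫_0^1 E_m(x) E_n(x) dx = 2(-1)^{n+1} (m! n! / (m+n+1)!) E_{m+n+1}(0). -/
open Polynomial

/-- The `n`-th Euler polynomial `E_n(x)`, characterized by the generating function
`2 e^{xz}/(e^z+1) = ∑ E_n(x) z^n/n!`; given by the standard closed form
`E_n(x) = (2^{n+1}/(n+1)) (B_{n+1}((x+1)/2) - B_{n+1}(x/2))` in terms of
Bernoulli polynomials. -/
noncomputable def eulerPoly (n : ℕ) (x : ℝ) : ℝ :=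
  2 ^ (n + 1) / (n + 1) *
    (((Polynomial.bernoulli (n + 1)).map (algebraMap ℚ ℝ)).eval ((x + 1) / 2) -
     ((Polynomial.bernoulli (n + 1)).map (algebraMap ℚ ℝ)).eval (x / 2))

/-- Reflection formula for Bernoulli polynomials. -/
lemma bernoulli_comp_one_sub (n : ℕ) :
    (Polynomial.bernoulli n).comp (1 - X) = ((-1 : ℚ) ^ n) • Polynomial.bernoulli n := by
  induction n with
  | zero => simp
  | succ n ih =>
    set d : ℚ[X] := (Polynomial.bernoulli (n+1)).comp (1 - X)
      - ((-1 : ℚ) ^ (n+1)) • Polynomial.bernoulli (n+1) with hd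
    have hderiv : derivative d = 0 := by
      rw [hd, derivative_sub, derivative_comp, derivative_smul,
        Polynomial.derivative_bernoulli_add_one]
      rw [mul_comp, ih]
      simp only [derivative_sub, derivative_one, derivative_X, zero_sub, add_comp,
        natCast_comp, one_comp, Polynomial.smul_eq_C_mul, map_pow, map_neg, map_one]
      push_cast
      ring
    have hc : d = C (d.coeff 0) := Polynomial.eq_C_of_derivative_eq_zero hderiv
    have h0 : d.eval 0 = 0 := by
      rw [hd]
      simp only [eval_sub, eval_comp, eval_sub, eval_one, eval_X, sub_zero, eval_smul,
        Polynomial.bernoulli_eval_one, Polynomial.bernoulli_eval_zero, smul_eq_mul]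
      rw [bernoulli'_eq_bernoulli]
      ring
    have : d = 0 := by
      rw [hc, Polynomial.coeff_zero_eq_eval_zero, h0, map_zero]
    have := sub_eq_zero.mp (hd ▸ this)
    linear_combination (norm := skip) this
    rw [this]; ring

lemma bernoulli_eval_half_odd {k : ℕ} (hk : Odd k) :
    (Polynomial.bernoulli k).eval (1/2 : ℚ) = 0 := by
  have h := congrArg (Polynomial.eval (1/2 : ℚ)) (bernoulli_comp_one_sub k)
  rw [eval_comp] at h
  simp only [eval_sub, eval_one, eval_X, eval_smul, smul_eq_mul, hk.neg_one_pow] at h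
  norm_num at h
  linarith

lemma bernoulli_odd_eval_zero {k : ℕ} (hk : Odd k) (hk1 : k ≠ 1) : _root_.bernoulli k = 0 := by
  rw [bernoulli_eq_bernoulli'_of_ne_one hk1]
  exact bernoulli'_eq_zero_of_odd hk (by rcases hk with ⟨t, rfl⟩; omega)

lemma eval_map_rat (p : ℚ[X]) (q : ℚ) :
    (p.map (algebraMap ℚ ℝ)).eval ((q : ℝ)) = ((p.eval q : ℚ) : ℝ) := by
  rw [show ((q : ℝ)) = algebraMap ℚ ℝ q from rfl, Polynomial.eval_map,
    Polynomial.eval₂_at_apply]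
  rfl

lemma eulerPoly_zero_eq (x : ℝ) : eulerPoly 0 x = 1 := by
  have hb : Polynomial.bernoulli 1 = X - Polynomial.C (1/2 : ℚ) := by
    have := Polynomial.bernoulli_def 1
    simp [Finset.sum_range_succ] at this
    rw [Polynomial.bernoulli_one]
    norm_num
  simp only [eulerPoly, hb]
  simp [Polynomial.eval_map]
  ring

lemma eulerPoly_one_add_zero {n : ℕ} (hn : n ≠ 0) : eulerPoly n 1 + eulerPoly n 0 = 0 := by
  have h1 : ((1:ℝ) + 1)/2 = ((1:ℚ):ℝ) := by norm_num
  have h2 : ((1:ℝ))/2 = (((1:ℚ)/2 : ℚ):ℝ) := by norm_num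
  have h3 : ((0:ℝ) + 1)/2 = (((1:ℚ)/2 : ℚ):ℝ) := by norm_num
  have h4 : ((0:ℝ))/2 = ((0:ℚ):ℝ) := by norm_num
  simp only [eulerPoly, h1, h2, h3, h4, eval_map_rat]
  rw [Polynomial.bernoulli_eval_one, Polynomial.bernoulli_eval_zero,
    bernoulli_eq_bernoulli'_of_ne_one (by omega : n + 1 ≠ 1)]
  ring

lemma eulerPoly_even_eval_zero {n : ℕ} (hn : Even n) (hn0 : n ≠ 0) : eulerPoly n 0 = 0 := by
  have h3 : ((0:ℝ) + 1)/2 = (((1:ℚ)/2 : ℚ):ℝ) := by norm_num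
  have h4 : ((0:ℝ))/2 = ((0:ℚ):ℝ) := by norm_num
  have hodd : Odd (n+1) := hn.add_one
  simp only [eulerPoly, h3, h4, eval_map_rat, Polynomial.bernoulli_eval_zero,
    bernoulli_eval_half_odd hodd, bernoulli_odd_eval_zero hodd (by omega)]
  simp

lemma continuous_eulerPoly (n : ℕ) : Continuous (eulerPoly n) := by
  unfold eulerPoly
  set P := (Polynomial.bernoulli (n + 1)).map (algebraMap ℚ ℝ)
  exact continuous_const.mul ((P.continuous.comp (by continuity)).sub
    (P.continuous.comp (by continuity)))

lemma hasDerivAt_eulerPoly (n : ℕ) (x : ℝ) :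
    HasDerivAt (eulerPoly (n+1)) ((n+1) * eulerPoly n x) x := by
  set P := (Polynomial.bernoulli (n + 2)).map (algebraMap ℚ ℝ) with hP
  set Q := (Polynomial.bernoulli (n + 1)).map (algebraMap ℚ ℝ) with hQ
  have hdP : Polynomial.derivative P = (n + 2 : ℝ[X]) * Q := by
    rw [hP, Polynomial.derivative_map, Polynomial.derivative_bernoulli_add_one,
      Polynomial.map_mul, hQ]
    simp only [Polynomial.map_add, Polynomial.map_natCast, Polynomial.map_one]
    push_cast
    ring
  have h1 : HasDerivAt (fun y : ℝ => P.eval ((y + 1) / 2))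
      ((Polynomial.derivative P).eval ((x+1)/2) * (1/2)) x := by
    have := (P.hasDerivAt ((x+1)/2)).comp x
      ((((hasDerivAt_id x).add_const 1).div_const 2))
    exact this
  have h2 : HasDerivAt (fun y : ℝ => P.eval (y / 2))
      ((Polynomial.derivative P).eval (x/2) * (1/2)) x := by
    have := (P.hasDerivAt (x/2)).comp x (((hasDerivAt_id x).div_const 2))
    exact this
  have h := ((h1.sub h2).const_mul ((2:ℝ) ^ (n + 1 + 1) / (n + 1 + 1)))
  have heq : eulerPoly (n+1) = fun y : ℝ =>
      (2:ℝ) ^ (n + 1 + 1) / (n + 1 + 1) * (P.eval ((y + 1) / 2) - P.eval (y / 2)) := by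
    funext y
    simp only [eulerPoly, hP]
    push_cast
    ring
  rw [heq]
  refine h.congr_deriv (Eq.symm ?_)
  rw [hdP]
  simp only [Polynomial.eval_mul, Polynomial.eval_add, Polynomial.eval_natCast,
    Polynomial.eval_ofNat, eulerPoly]
  rw [← hQ]
  set a := Polynomial.eval ((x+1)/2) Q
  set b := Polynomial.eval (x/2) Q
  have hn2 : (n:ℝ) + 2 ≠ 0 := by positivity
  have hn1 : (n:ℝ) + 1 ≠ 0 := by positivity
  push_cast
  field_simp
  ring

lemma integral_eulerPoly (n : ℕ) :
    ∫ x in (0:ℝ)..1, eulerPoly n x = -2 * eulerPoly (n+1) 0 / (n+1) := by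
  have hFTC : ∫ x in (0:ℝ)..1, eulerPoly n x =
      eulerPoly (n+1) 1 / (n+1) - eulerPoly (n+1) 0 / (n+1) := by
    apply intervalIntegral.integral_eq_sub_of_hasDerivAt
      (f := fun y => eulerPoly (n+1) y / (n+1))
    · intro x _
      have := (hasDerivAt_eulerPoly n x).div_const ((n:ℝ)+1)
      have hn1 : (n:ℝ) + 1 ≠ 0 := by positivity
      refine this.congr_deriv (Eq.symm ?_)
      field_simp
    · exact (continuous_eulerPoly n).intervalIntegrable 0 1
  rw [hFTC]
  have h := eulerPoly_one_add_zero (n := n + 1) (by omega)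
  have : eulerPoly (n+1) 1 = -eulerPoly (n+1) 0 := by linarith
  rw [this]
  ring

lemma eulerPoly_key (m : ℕ) : ∀ n : ℕ,
    ∫ x in (0:ℝ)..1, eulerPoly m x * eulerPoly n x =
      2 * (-1 : ℝ) ^ (m + 1) * ((m.factorial : ℝ) * n.factorial / (m + n + 1).factorial) *
        eulerPoly (m + n + 1) 0 := by
  induction m with
  | zero =>
    intro n
    simp only [eulerPoly_zero_eq, one_mul, integral_eulerPoly]
    rw [Nat.factorial_succ]
    push_cast
    have h : (n:ℝ) + 1 ≠ 0 := by positivity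
    have h2 : (n.factorial : ℝ) ≠ 0 := by exact_mod_cast n.factorial_ne_zero
    simp only [zero_add, pow_one, Nat.factorial_zero]
    push_cast
    field_simp
  | succ m ih =>
    intro n
    have hn1 : (n:ℝ) + 1 ≠ 0 := by positivity
    -- integration by parts
    have hIBP := intervalIntegral.integral_mul_deriv_eq_deriv_mul
      (u := eulerPoly (m+1)) (u' := fun x => ((m:ℝ)+1) * eulerPoly m x)
      (v := fun y => eulerPoly (n+1) y / ((n:ℝ)+1)) (v' := eulerPoly n)
      (a := 0) (b := 1)
      (fun x _ => hasDerivAt_eulerPoly m x)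
      (fun x _ => by
        have := (hasDerivAt_eulerPoly n x).div_const ((n:ℝ)+1)
        refine this.congr_deriv (Eq.symm ?_)
        field_simp)
      ((continuous_const.mul (continuous_eulerPoly m)).intervalIntegrable 0 1)
      ((continuous_eulerPoly n).intervalIntegrable 0 1)
    have hb1 := eulerPoly_one_add_zero (n := m+1) (by omega)
    have hb2 := eulerPoly_one_add_zero (n := n+1) (by omega)
    have hbd : eulerPoly (m+1) 1 * (eulerPoly (n+1) 1 / ((n:ℝ)+1)) -
        eulerPoly (m+1) 0 * (eulerPoly (n+1) 0 / ((n:ℝ)+1)) = 0 := by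
      have e1 : eulerPoly (m+1) 1 = -eulerPoly (m+1) 0 := by linarith
      have e2 : eulerPoly (n+1) 1 = -eulerPoly (n+1) 0 := by linarith
      rw [e1, e2]; ring
    rw [hbd, zero_sub] at hIBP
    have hrec : ∫ x in (0:ℝ)..1, ((m:ℝ)+1) * eulerPoly m x * (eulerPoly (n+1) x / ((n:ℝ)+1)) =
        (((m:ℝ)+1)/((n:ℝ)+1)) * ∫ x in (0:ℝ)..1, eulerPoly m x * eulerPoly (n+1) x := by
      rw [← intervalIntegral.integral_const_mul]
      congr 1
      funext x
      ring
    rw [hIBP, hrec, ih (n+1)]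
    have hidx : m + (n + 1) + 1 = m + 1 + n + 1 := by omega
    rw [hidx]
    have hfac : ((m + 1 + n + 1).factorial : ℝ) ≠ 0 := by
      exact_mod_cast (m + 1 + n + 1).factorial_ne_zero
    rw [Nat.factorial_succ n, Nat.factorial_succ m]
    push_cast
    have h2 : (n.factorial : ℝ) ≠ 0 := by exact_mod_cast n.factorial_ne_zero
    have hm1 : (m:ℝ) + 1 ≠ 0 := by positivity
    field_simp
    ring

theorem integral_eulerPoly_mul_eulerPoly (m n : ℕ) :
    ∫ x in (0:ℝ)..1, eulerPoly m x * eulerPoly n x =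
      2 * (-1 : ℝ) ^ (n + 1) * ((m.factorial : ℝ) * n.factorial / (m + n + 1).factorial) *
        eulerPoly (m + n + 1) 0 := by
  rw [eulerPoly_key m n]
  rcases Nat.even_or_odd (m + n) with h | h
  · have hmn : Even ((m + 1) + (n + 1)) := by
      rcases h with ⟨k, hk⟩; exact ⟨k + 1, by omega⟩
    have h1 : (-1 : ℝ) ^ (m + 1) * (-1 : ℝ) ^ (n + 1) = 1 := by
      rw [← pow_add]; exact hmn.neg_one_pow
    have h2 : (-1 : ℝ) ^ (n + 1) * (-1 : ℝ) ^ (n + 1) = 1 := by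
      rw [← pow_add]; exact Even.neg_one_pow ⟨n + 1, rfl⟩
    have hab : (-1 : ℝ) ^ (m + 1) = (-1 : ℝ) ^ (n + 1) := by
      linear_combination ((-1:ℝ)^(n+1)) * h1 - ((-1:ℝ)^(m+1)) * h2
    rw [hab]
  · have hz : eulerPoly (m + n + 1) 0 = 0 :=
      eulerPoly_even_eval_zero h.add_one (by omega)
    rw [hz, mul_zero, mul_zero]
end

section
/- For every nonnegative integer n, ∑_{j=0}^n C(n,j) E_{j+1}(0)/(j+1) = -(E_{n+1}(0) + 1)/(n+1). -/
open Finset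

private def U (m : ℕ) : ℚ := ∑ i ∈ range m, (m.choose i : ℚ) * 2 ^ i * bernoulli i

private lemma eval_map_algebraMap (p : Polynomial ℚ) (q : ℚ) :
    (p.map (algebraMap ℚ ℝ)).eval ((q : ℚ) : ℝ) = ((p.eval q : ℚ) : ℝ) := by
  have : ((q : ℚ) : ℝ) = algebraMap ℚ ℝ q := by norm_num [algebraMap]
  rw [Polynomial.eval_map, this, Polynomial.eval₂_at_apply]
  norm_num [algebraMap]

private lemma bernoulli_eval (m : ℕ) (x : ℚ) : (Polynomial.bernoulli m).eval x =
    ∑ i ∈ range (m + 1), bernoulli i * m.choose i * x ^ (m - i) := by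
  simp [Polynomial.bernoulli, Polynomial.eval_finset_sum, Polynomial.eval_monomial]

private lemma q_euler (m : ℕ) (hm : 0 < m) :
    (2 ^ m / (m : ℚ)) * ((Polynomial.bernoulli m).eval (1/2 : ℚ)
      - (Polynomial.bernoulli m).eval 0) = U m / m := by
  rw [Polynomial.bernoulli_eval_zero, bernoulli_eval]
  have hnum : (2:ℚ) ^ m * ((∑ i ∈ range (m+1),
      bernoulli i * m.choose i * (1/2 : ℚ) ^ (m - i)) - bernoulli m) = U m := by
    rw [mul_sub, Finset.mul_sum]
    have h1 : ∀ i ∈ range (m+1), (2:ℚ) ^ m * (bernoulli i * m.choose i * (1/2:ℚ) ^ (m-i))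
        = (m.choose i : ℚ) * 2 ^ i * bernoulli i := by
      intro i hi
      have hi' : i ≤ m := by simpa [Nat.lt_succ_iff] using hi
      have h2 : (2:ℚ) ^ m = 2 ^ i * 2 ^ (m - i) := by
        rw [← pow_add, Nat.add_sub_cancel' hi']
      rw [h2, one_div, inv_pow]
      have : ((2:ℚ) ^ (m - i)) ≠ 0 := by positivity
      field_simp
    rw [Finset.sum_congr rfl h1, Finset.sum_range_succ]
    simp only [Nat.choose_self, Nat.cast_one, one_mul, U]
    ring
  rw [div_mul_eq_mul_div, hnum]

private lemma keysum (m : ℕ) (hm : 2 ≤ m) :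
    ∑ j ∈ range (m + 1), (m.choose j : ℚ) * U j = - U m := by
  have step1 : ∀ j ∈ range (m+1), (m.choose j : ℚ) * U j =
      ∑ i ∈ range (m+1), if i < j then
        (m.choose j : ℚ) * ((j.choose i : ℚ) * 2 ^ i * bernoulli i) else 0 := by
    intro j hj
    have hj' : j ≤ m := by simpa [Nat.lt_succ_iff] using hj
    rw [Finset.sum_ite, Finset.sum_const_zero, add_zero]
    have hfilt : (range (m+1)).filter (fun i => i < j) = range j := by
      ext i; simp [Nat.lt_succ_iff]; omega
    rw [hfilt, U, Finset.mul_sum]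
  rw [Finset.sum_congr rfl step1, Finset.sum_comm]
  have step2 : ∀ i ∈ range (m+1),
      (∑ j ∈ range (m+1), if i < j then
        (m.choose j : ℚ) * ((j.choose i : ℚ) * 2 ^ i * bernoulli i) else 0)
      = (m.choose i : ℚ) * bernoulli i * 2 ^ m - (m.choose i : ℚ) * 2 ^ i * bernoulli i := by
    intro i hi
    have hi' : i ≤ m := by simpa [Nat.lt_succ_iff] using hi
    rw [Finset.sum_ite, Finset.sum_const_zero, add_zero]
    have hfilt : (range (m+1)).filter (fun j => i < j) = Ico (i+1) (m+1) := by
      ext j; simp [Nat.lt_succ_iff]; omega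
    rw [hfilt]
    have hchoose : ∑ j ∈ Ico (i+1) (m+1), m.choose j * j.choose i
        = m.choose i * (2 ^ (m - i) - 1) := by
      have hc : ∀ j ∈ Ico (i+1) (m+1), m.choose j * j.choose i
          = m.choose i * (m - i).choose (j - i) := by
        intro j hj
        simp only [Finset.mem_Ico] at hj
        exact Nat.choose_mul (by omega)
      rw [Finset.sum_congr rfl hc, ← Finset.mul_sum]
      congr 1
      rw [Finset.sum_Ico_eq_sum_range]
      have hMn : m + 1 - (i + 1) = m - i := by omega
      rw [hMn]
      have h3 : ∀ t ∈ range (m - i), (m - i).choose (i + 1 + t - i) = (m-i).choose (t+1) := by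
        intro t ht; congr 1; omega
      rw [Finset.sum_congr rfl h3]
      have h4 := Nat.sum_range_choose (m - i)
      rw [Finset.sum_range_succ'] at h4
      simp at h4
      omega
    have hcast : ∑ j ∈ Ico (i+1) (m+1), (m.choose j : ℚ) * ((j.choose i : ℚ) * 2 ^ i * bernoulli i)
        = ((m.choose i * (2 ^ (m - i) - 1) : ℕ) : ℚ) * 2 ^ i * bernoulli i := by
      rw [← hchoose]
      push_cast
      rw [Finset.sum_mul, Finset.sum_mul]
      apply Finset.sum_congr rfl
      intro j hj; ring
    rw [hcast]
    have h5 : (1:ℕ) ≤ 2 ^ (m - i) := Nat.one_le_two_pow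
    have h6 : ((m.choose i * (2 ^ (m - i) - 1) : ℕ) : ℚ)
        = (m.choose i : ℚ) * (2 ^ (m - i) - 1) := by
      push_cast [h5]; ring
    rw [h6]
    have h7 : (2:ℚ) ^ (m - i) * 2 ^ i = 2 ^ m := by
      rw [← pow_add]; congr 1; omega
    have : (m.choose i : ℚ) * (2 ^ (m-i) - 1) * 2 ^ i * bernoulli i
        = (m.choose i : ℚ) * bernoulli i * (2 ^ (m-i) * 2 ^ i)
          - (m.choose i : ℚ) * 2 ^ i * bernoulli i := by ring
    rw [this, h7]
  rw [Finset.sum_congr rfl step2, Finset.sum_sub_distrib]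
  have hB : ∑ i ∈ range (m+1), (m.choose i : ℚ) * bernoulli i * 2 ^ m
      = bernoulli m * 2 ^ m := by
    rw [Finset.sum_range_succ, Nat.choose_self]
    have := sum_bernoulli m
    rw [if_neg (by omega)] at this
    have h8 : ∑ i ∈ range m, (m.choose i : ℚ) * bernoulli i * 2 ^ m
        = (∑ i ∈ range m, (m.choose i : ℚ) * bernoulli i) * 2 ^ m := by
      rw [Finset.sum_mul]
    rw [h8, this]
    simp
  have hU : ∑ i ∈ range (m+1), (m.choose i : ℚ) * 2 ^ i * bernoulli i
      = U m + 2 ^ m * bernoulli m := by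
    rw [Finset.sum_range_succ, Nat.choose_self, U]
    push_cast
    ring
  rw [hB, hU]
  ring

private lemma keyq (n : ℕ) :
    ∑ j ∈ range (n + 1), (n.choose j : ℚ) * (U (j + 2) / (j + 2)) / (j + 1) =
      -(U (n + 2) / (n + 2) + 1) / (n + 1) := by
  have hks := keysum (n + 2) (by omega)
  rw [Finset.sum_range_succ', Finset.sum_range_succ'] at hks
  have hU0 : U 0 = 0 := by simp [U]
  have hU1 : U 1 = 1 := by simp [U]
  rw [hU0, hU1] at hks
  simp only [zero_add, Nat.choose_one_right, mul_zero, mul_one, add_zero] at hks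
  push_cast at hks
  -- hks : ∑ j ∈ range (n+1), ((n+2).choose (j+1+1) : ℚ) * U (j+1+1) + (n+2) = -U (n+2)
  have hterm : ∀ j ∈ range (n + 1),
      (n.choose j : ℚ) * (U (j + 2) / (j + 2)) / (j + 1)
      = ((n+2).choose (j+1+1) : ℚ) * U (j+1+1) / ((n+1) * (n+2)) := by
    intro j hj
    have h1 : (n + 1) * n.choose j = (n+1).choose (j+1) * (j+1) := Nat.add_one_mul_choose_eq n j
    have h2 : (n + 2) * (n+1).choose (j+1) = (n+2).choose (j+2) * (j+2) :=
      Nat.add_one_mul_choose_eq (n+1) (j+1)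
    have h3 : (n+1) * (n+2) * n.choose j = (n+2).choose (j+2) * ((j+1) * (j+2)) := by
      calc (n+1) * (n+2) * n.choose j = (n+2) * ((n+1) * n.choose j) := by ring
        _ = (n+2) * ((n+1).choose (j+1) * (j+1)) := by rw [h1]
        _ = ((n+2) * (n+1).choose (j+1)) * (j+1) := by ring
        _ = ((n+2).choose (j+2) * (j+2)) * (j+1) := by rw [h2]
        _ = (n+2).choose (j+2) * ((j+1) * (j+2)) := by ring
    have h3q : ((n:ℚ)+1) * ((n:ℚ)+2) * (n.choose j : ℚ)
        = ((n+2).choose (j+2) : ℚ) * (((j:ℚ)+1) * ((j:ℚ)+2)) := by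
      exact_mod_cast congrArg (Nat.cast : ℕ → ℚ) h3
    have hj1 : ((j:ℚ)+1) ≠ 0 := by positivity
    have hj2 : ((j:ℚ)+2) ≠ 0 := by positivity
    have hn1 : ((n:ℚ)+1) ≠ 0 := by positivity
    have hn2 : ((n:ℚ)+2) ≠ 0 := by positivity
    show (n.choose j : ℚ) * (U (j + 2) / ((j:ℚ) + 2)) / ((j:ℚ) + 1)
        = ((n+2).choose (j+2) : ℚ) * U (j+2) / (((n:ℚ)+1) * ((n:ℚ)+2))
    field_simp
    linear_combination U (j+2) * h3q
  rw [Finset.sum_congr rfl hterm]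
  rw [← Finset.sum_div]
  have hsum : ∑ j ∈ range (n+1), ((n+2).choose (j+1+1) : ℚ) * U (j+1+1)
      = -U (n+2) - ((n:ℚ)+2) := by linarith [hks]
  rw [hsum]
  have hn1 : ((n:ℚ)+1) ≠ 0 := by positivity
  have hn2 : ((n:ℚ)+2) ≠ 0 := by positivity
  field_simp
  ring

private lemma eulerPoly_zero (k : ℕ) :
    eulerPoly k 0 = ((U (k+1) / ((k:ℚ)+1) : ℚ) : ℝ) := by
  have hq := q_euler (k+1) k.succ_pos
  push_cast at hq
  unfold eulerPoly
  rw [show ((0:ℝ)+1)/2 = (((1/2:ℚ)):ℝ) by norm_num,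
      show (0:ℝ)/2 = (((0:ℚ)):ℝ) by norm_num,
      eval_map_algebraMap, eval_map_algebraMap]
  have h2 : ((2 ^ (k+1) / ((k:ℚ)+1) * ((Polynomial.bernoulli (k+1)).eval (1/2:ℚ)
      - (Polynomial.bernoulli (k+1)).eval 0) : ℚ) : ℝ) = ((U (k+1) / ((k:ℚ)+1) : ℚ) : ℝ) := by
    exact_mod_cast congrArg (fun q : ℚ => (q : ℝ)) hq
  rw [← h2]
  push_cast
  ring

theorem sum_choose_eulerPoly_zero (n : ℕ) :
    ∑ j ∈ Finset.range (n + 1), (n.choose j : ℝ) * eulerPoly (j + 1) 0 / (j + 1) =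
      -(eulerPoly (n + 1) 0 + 1) / (n + 1) := by
  have hq := keyq n
  calc ∑ j ∈ Finset.range (n + 1), (n.choose j : ℝ) * eulerPoly (j + 1) 0 / (j + 1)
      = ((∑ j ∈ range (n+1), (n.choose j : ℚ) * (U (j+2)/(j+2)) / (j+1) : ℚ) : ℝ) := by
        push_cast
        apply Finset.sum_congr rfl
        intro j hj
        rw [eulerPoly_zero (j+1)]
        push_cast
        try ring
    _ = ((-(U (n+2)/(n+2) + 1)/(n+1) : ℚ) : ℝ) := by rw [hq]
    _ = -(eulerPoly (n + 1) 0 + 1) / (n + 1) := by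
        rw [eulerPoly_zero (n+1)]
        push_cast
        ring
end

section
/- For every nonnegative integer n, ∑_{j=0}^n C(n,j) E_{j+2}(0)/((j+1)(j+2)) = -(2 E_{n+2}(0) - n)/(2(n+1)(n+2)). -/
open Finset

namespace EulerAux

/-- `f l = 2^l B_l(1/2)` as a finite sum over Bernoulli numbers. -/
noncomputable def f (l : ℕ) : ℚ := ∑ i ∈ range (l + 1), (l.choose i : ℚ) * bernoulli i * 2 ^ i

lemma nat_sum_choose_mul_choose {m i : ℕ} (h : i ≤ m) :
    ∑ l ∈ range (m + 1), m.choose l * l.choose i = m.choose i * 2 ^ (m - i) := by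
  have hm : m + 1 = i + (m - i + 1) := by omega
  rw [hm, Finset.sum_range_add]
  have h1 : ∑ l ∈ range i, m.choose l * l.choose i = 0 := by
    apply Finset.sum_eq_zero
    intro l hl
    rw [Nat.choose_eq_zero_of_lt (mem_range.mp hl), mul_zero]
  rw [h1, zero_add]
  have h2 : ∀ k ∈ range (m - i + 1), m.choose (i + k) * (i + k).choose i
      = m.choose i * (m - i).choose k := by
    intro k hk
    have hk' : k ≤ m - i := by have := mem_range.mp hk; omega
    have h3 := Nat.choose_mul (n := m) (show i ≤ i + k by omega)
    rw [h3, Nat.add_sub_cancel_left]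
  rw [Finset.sum_congr rfl h2, ← Finset.mul_sum, Nat.sum_range_choose]

lemma sum_choose_f (m : ℕ) :
    ∑ l ∈ range (m + 1), (m.choose l : ℚ) * f l
      = 2 ^ m * (bernoulli m + if m = 1 then 1 else 0) := by
  have step1 : ∀ l ∈ range (m + 1), (m.choose l : ℚ) * f l
      = ∑ i ∈ range (m + 1), (m.choose l : ℚ) * ((l.choose i : ℚ) * bernoulli i * 2 ^ i) := by
    intro l hl
    have hl' := mem_range.mp hl
    rw [f, Finset.mul_sum]
    apply Finset.sum_subset
    · intro x hx
      simp only [mem_range] at *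
      omega
    · intro x hx hx'
      simp only [mem_range, not_lt] at hx'
      rw [Nat.choose_eq_zero_of_lt (show l < x by omega)]
      simp
  rw [Finset.sum_congr rfl step1, Finset.sum_comm]
  have step2 : ∀ i ∈ range (m + 1),
      (∑ l ∈ range (m + 1), (m.choose l : ℚ) * ((l.choose i : ℚ) * bernoulli i * 2 ^ i))
        = (m.choose i : ℚ) * bernoulli i * 2 ^ m := by
    intro i hi
    have hi' : i ≤ m := by simpa [Nat.lt_succ_iff] using hi
    have : ∑ l ∈ range (m + 1), (m.choose l : ℚ) * (l.choose i : ℚ)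
        = (m.choose i : ℚ) * 2 ^ (m - i) := by
      have := nat_sum_choose_mul_choose hi'
      exact_mod_cast congrArg (Nat.cast : ℕ → ℚ) this
    calc ∑ l ∈ range (m + 1), (m.choose l : ℚ) * ((l.choose i : ℚ) * bernoulli i * 2 ^ i)
        = (∑ l ∈ range (m + 1), (m.choose l : ℚ) * (l.choose i : ℚ)) * (bernoulli i * 2 ^ i) := by
          rw [Finset.sum_mul]; apply Finset.sum_congr rfl; intro l _; ring
      _ = (m.choose i : ℚ) * 2 ^ (m - i) * (bernoulli i * 2 ^ i) := by rw [this]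
      _ = (m.choose i : ℚ) * bernoulli i * (2 ^ (m - i) * 2 ^ i) := by ring
      _ = (m.choose i : ℚ) * bernoulli i * 2 ^ m := by
          rw [← pow_add, Nat.sub_add_cancel hi']
  rw [Finset.sum_congr rfl step2]
  have step3 : ∑ i ∈ range (m + 1), (m.choose i : ℚ) * bernoulli i
      = bernoulli m + if m = 1 then 1 else 0 := by
    rw [Finset.sum_range_succ, sum_bernoulli, Nat.choose_self]
    push_cast
    ring
  rw [← Finset.sum_mul, step3]
  ring

end EulerAux

namespace EulerAux

lemma bernoulli_two' : (bernoulli 2 : ℚ) = 1 / 6 := by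
  rw [bernoulli, bernoulli'_two]; norm_num

lemma f_zero : f 0 = 1 := by simp [f]

lemma f_one : f 1 = 0 := by
  norm_num [f, Finset.sum_range_succ, bernoulli_one]

lemma f_two : f 2 = -1/3 := by
  norm_num [f, Finset.sum_range_succ, bernoulli_one, bernoulli_two']

lemma two_pow_mul_eval_half (m : ℕ) :
    (2 : ℚ) ^ m * (Polynomial.bernoulli m).eval (1 / 2 : ℚ) = f m := by
  rw [Polynomial.bernoulli, Polynomial.eval_finset_sum, f, Finset.mul_sum]
  apply Finset.sum_congr rfl
  intro i hi
  have hi' : i ≤ m := by have := mem_range.mp hi; omega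
  rw [Polynomial.eval_monomial]
  have hp : (2 : ℚ) ^ (m - i) * 2 ^ i = 2 ^ m := by
    rw [← pow_add, Nat.sub_add_cancel hi']
  rw [← hp]
  have h2 : ((1 : ℚ) / 2) ^ (m - i) = (2 ^ (m - i))⁻¹ := by
    rw [one_div, inv_pow]
  rw [h2]
  have h3 : (2 : ℚ) ^ (m - i) ≠ 0 := by positivity
  field_simp

end EulerAux


namespace EulerAux

lemma map_eval_rat (p : Polynomial ℚ) (x : ℚ) :
    (p.map (algebraMap ℚ ℝ)).eval ((x : ℝ)) = ((p.eval x : ℚ) : ℝ) := by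
  rw [Polynomial.eval_map]
  have h : ((x : ℚ) : ℝ) = algebraMap ℚ ℝ x := by norm_num
  rw [h, Polynomial.eval₂_at_apply]
  norm_num

lemma eulerPoly_zero_eq (k : ℕ) :
    eulerPoly k 0 = (((f (k + 1) - 2 ^ (k + 1) * bernoulli (k + 1)) / (k + 1) : ℚ) : ℝ) := by
  have h1 : ((0 : ℝ) + 1) / 2 = ((1 / 2 : ℚ) : ℝ) := by norm_num
  have h2 : (0 : ℝ) / 2 = ((0 : ℚ) : ℝ) := by norm_num
  rw [eulerPoly, h1, h2, map_eval_rat, map_eval_rat, Polynomial.bernoulli_eval_zero]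
  have hk : ((k : ℚ) + 1) ≠ 0 := by positivity
  have hq : (2 : ℚ) ^ (k + 1) / (k + 1) *
        ((Polynomial.bernoulli (k + 1)).eval (1 / 2 : ℚ) - bernoulli (k + 1))
      = (f (k + 1) - 2 ^ (k + 1) * bernoulli (k + 1)) / (k + 1) := by
    have hf := two_pow_mul_eval_half (k + 1)
    field_simp
    linear_combination hf
  rw [← hq]
  push_cast
  ring

end EulerAux

namespace EulerAux

lemma key (n : ℕ) :
    ∑ j ∈ range (n + 1), ((n + 3).choose (j + 3) : ℚ) * (f (j + 3) - 2 ^ (j + 3) * bernoulli (j + 3))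
      = 2 ^ (n + 3) * bernoulli (n + 3) - f (n + 3) - (n + 3) + ((n + 3).choose 2 : ℚ) := by
  set g : ℕ → ℚ := fun l => ((n + 3).choose l : ℚ) * (f l - 2 ^ l * bernoulli l) with hg
  have hS : ∑ l ∈ range (n + 3 + 1), g l = 2 ^ (n + 3) * bernoulli (n + 3) - f (n + 3) := by
    have h1 : ∑ l ∈ range (n + 3 + 1), g l
        = (∑ l ∈ range (n + 3 + 1), ((n + 3).choose l : ℚ) * f l)
          - ∑ l ∈ range (n + 3 + 1), ((n + 3).choose l : ℚ) * bernoulli l * 2 ^ l := by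
      rw [← Finset.sum_sub_distrib]
      apply Finset.sum_congr rfl
      intro l _
      simp only [hg]
      ring
    have h2 : ∑ l ∈ range (n + 3 + 1), ((n + 3).choose l : ℚ) * bernoulli l * 2 ^ l = f (n + 3) := rfl
    rw [h1, h2, sum_choose_f (n + 3)]
    have : n + 3 ≠ 1 := by omega
    rw [if_neg this]
    ring
  have hpeel : ∑ l ∈ range (n + 3 + 1), g l
      = (∑ j ∈ range (n + 1), g (j + 3)) + g 2 + g 1 + g 0 := by
    rw [Finset.sum_range_succ' g (n + 3), Finset.sum_range_succ' (fun i => g (i + 1)) (n + 2),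
      Finset.sum_range_succ' (fun i => g (i + 2)) (n + 1)]
  have hg0 : g 0 = 0 := by simp [hg, f_zero]
  have hg1 : g 1 = (n + 3 : ℚ) := by
    simp [hg, f_one, bernoulli_one]
    norm_num
  have hg2 : g 2 = -((n + 3).choose 2 : ℚ) := by
    simp [hg, f_two, bernoulli_two']
    norm_num
  have := hS
  rw [hpeel, hg0, hg1, hg2] at this
  linarith [this]

end EulerAux

namespace EulerAux

lemma choose_cast_eq (n j : ℕ) :
    ((j : ℚ) + 1) * ((j : ℚ) + 2) * ((j : ℚ) + 3) * ((n + 3).choose (j + 3) : ℚ)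
      = ((n : ℚ) + 1) * ((n : ℚ) + 2) * ((n : ℚ) + 3) * (n.choose j : ℚ) := by
  have h1 : ((n : ℚ) + 1) * (n.choose j : ℚ) = ((n + 1).choose (j + 1) : ℚ) * ((j : ℚ) + 1) := by
    exact_mod_cast congrArg (Nat.cast (R := ℚ)) (Nat.add_one_mul_choose_eq n j)
  have h2 : ((n : ℚ) + 2) * ((n + 1).choose (j + 1) : ℚ)
      = ((n + 2).choose (j + 2) : ℚ) * ((j : ℚ) + 2) := by
    exact_mod_cast congrArg (Nat.cast (R := ℚ)) (Nat.add_one_mul_choose_eq (n + 1) (j + 1))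
  have h3 : ((n : ℚ) + 3) * ((n + 2).choose (j + 2) : ℚ)
      = ((n + 3).choose (j + 3) : ℚ) * ((j : ℚ) + 3) := by
    exact_mod_cast congrArg (Nat.cast (R := ℚ)) (Nat.add_one_mul_choose_eq (n + 2) (j + 2))
  linear_combination (-((n : ℚ) + 2) * ((n : ℚ) + 3)) * h1 - (((j : ℚ) + 1) * ((n : ℚ) + 3)) * h2
    - (((j : ℚ) + 1) * ((j : ℚ) + 2)) * h3

lemma main_q (n : ℕ) :
    ∑ j ∈ range (n + 1), (n.choose j : ℚ) *
        ((f (j + 3) - 2 ^ (j + 3) * bernoulli (j + 3)) / ((j : ℚ) + 3)) / (((j : ℚ) + 1) * ((j : ℚ) + 2))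
      = -(2 * ((f (n + 3) - 2 ^ (n + 3) * bernoulli (n + 3)) / ((n : ℚ) + 3)) - (n : ℚ)) /
          (2 * ((n : ℚ) + 1) * ((n : ℚ) + 2)) := by
  have hD : ((n : ℚ) + 1) * ((n : ℚ) + 2) * ((n : ℚ) + 3) ≠ 0 := by positivity
  have hterm : ∀ j : ℕ, (n.choose j : ℚ) *
        ((f (j + 3) - 2 ^ (j + 3) * bernoulli (j + 3)) / ((j : ℚ) + 3)) / (((j : ℚ) + 1) * ((j : ℚ) + 2))
      = ((n + 3).choose (j + 3) : ℚ) * (f (j + 3) - 2 ^ (j + 3) * bernoulli (j + 3)) /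
          (((n : ℚ) + 1) * ((n : ℚ) + 2) * ((n : ℚ) + 3)) := by
    intro j
    have h1 : ((j : ℚ) + 1) ≠ 0 := by positivity
    have h2 : ((j : ℚ) + 2) ≠ 0 := by positivity
    have h3 : ((j : ℚ) + 3) ≠ 0 := by positivity
    have hCC : ((n + 3).choose (j + 3) : ℚ)
        = ((n : ℚ) + 1) * ((n : ℚ) + 2) * ((n : ℚ) + 3) * (n.choose j : ℚ) /
            (((j : ℚ) + 1) * ((j : ℚ) + 2) * ((j : ℚ) + 3)) := by
      rw [eq_div_iff (by positivity)]
      linear_combination choose_cast_eq n j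
    rw [hCC]
    field_simp
  rw [Finset.sum_congr rfl fun j _ => hterm j, ← Finset.sum_div, key n]
  have hC2 : ((n + 3).choose 2 : ℚ) = ((n : ℚ) + 3) * ((n : ℚ) + 2) / 2 := by
    have h := Nat.add_one_mul_choose_eq (n + 2) 1
    rw [Nat.choose_one_right] at h
    have h' : ((n : ℚ) + 3) * ((n : ℚ) + 2) = ((n + 3).choose 2 : ℚ) * 2 := by
      exact_mod_cast congrArg (Nat.cast (R := ℚ)) h
    rw [eq_div_iff (by norm_num)]
    linarith [h']
  rw [hC2]
  have h3 : ((n : ℚ) + 3) ≠ 0 := by positivity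
  have h1 : ((n : ℚ) + 1) ≠ 0 := by positivity
  have h2 : ((n : ℚ) + 2) ≠ 0 := by positivity
  field_simp
  ring

end EulerAux

namespace EulerAux

lemma eulerPoly_zero_eq' (k : ℕ) :
    eulerPoly (k + 2) 0
      = (((f (k + 3) - 2 ^ (k + 3) * bernoulli (k + 3)) / ((k : ℚ) + 3) : ℚ) : ℝ) := by
  rw [eulerPoly_zero_eq (k + 2), show k + 2 + 1 = k + 3 from rfl]
  push_cast
  ring_nf

end EulerAux

theorem sum_choose_eulerPoly_zero' (n : ℕ) :
    ∑ j ∈ Finset.range (n + 1),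
        (n.choose j : ℝ) * eulerPoly (j + 2) 0 / ((j + 1) * (j + 2)) =
      -(2 * eulerPoly (n + 2) 0 - n) / (2 * (n + 1) * (n + 2)) := by
  have h1 : ∀ j : ℕ, (n.choose j : ℝ) * eulerPoly (j + 2) 0 / ((j + 1) * (j + 2))
      = (((n.choose j : ℚ) * ((EulerAux.f (j + 3) - 2 ^ (j + 3) * bernoulli (j + 3)) / ((j : ℚ) + 3))
          / (((j : ℚ) + 1) * ((j : ℚ) + 2)) : ℚ) : ℝ) := by
    intro j
    rw [EulerAux.eulerPoly_zero_eq' j]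
    push_cast
    ring
  rw [Finset.sum_congr rfl fun j _ => h1 j, ← Rat.cast_sum, EulerAux.main_q n,
    EulerAux.eulerPoly_zero_eq' n]
  push_cast
  ring
end

section
/- For every positive integer m, ∫_0^1 sec(πx) E_{2m-1}(x) dx = (-1)^m (4(2m-1)!/π^{2m}) β(2m), where β(s) = ∑_{n=0}^∞ (-1)^n/(2n+1)^s is the Dirichlet beta function. -/
open Real MeasureTheory Set


/-- The Dirichlet beta function `β(s) = ∑_{n=0}^∞ (-1)^n/(2n+1)^s` (here at integer
arguments). -/
noncomputable def dirichletBeta (s : ℕ) : ℝ := ∑' n : ℕ, (-1 : ℝ) ^ n / (2 * n + 1) ^ s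





noncomputable def secG : ℕ → ℝ → ℝ
  | 0, _ => 1
  | (k+1), θ => 2 * Real.cos (2*(k+1)*θ) - secG k θ

lemma secG_succ (k : ℕ) (θ : ℝ) :
    secG (k+1) θ = 2 * Real.cos (2*(k+1)*θ) - secG k θ := rfl

lemma cos_eq_cos_mul_secG (k : ℕ) (θ : ℝ) :
    Real.cos ((2*(k:ℝ)+1)*θ) = Real.cos θ * secG k θ := by
  induction k with
  | zero => simp [secG]
  | succ k ih =>
    have h1 : (2*((k:ℝ)+1)+1)*θ = (2*((k:ℝ)+1))*θ + θ := by ring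
    have h2 : (2*(k:ℝ)+1)*θ = (2*((k:ℝ)+1))*θ - θ := by ring
    rw [h2, Real.cos_sub] at ih
    push_cast [secG_succ, h1, Real.cos_add]
    nlinarith [ih]

lemma abs_secG_le (k : ℕ) (θ : ℝ) : |secG k θ| ≤ 2*k+1 := by
  induction k with
  | zero => simp [secG]
  | succ k ih =>
    rw [secG_succ]
    have h := Real.abs_cos_le_one (2*((k+1:ℕ):ℝ)*θ)
    have h2 : |2 * Real.cos (2*((k+1:ℕ):ℝ)*θ) - secG k θ|
        ≤ |2 * Real.cos (2*((k+1:ℕ):ℝ)*θ)| + |secG k θ| := abs_sub _ _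
    rw [abs_mul, abs_two] at h2
    push_cast at h2 h ⊢
    linarith

lemma continuous_secG (k : ℕ) : Continuous (secG k) := by
  induction k with
  | zero => exact continuous_const
  | succ k ih =>
    have he : secG (k+1) = fun θ => 2 * Real.cos (2*((k:ℝ)+1)*θ) - secG k θ :=
      funext (secG_succ k)
    rw [he]
    exact ((continuous_const.mul (Real.continuous_cos.comp (by fun_prop))).sub ih)

lemma integral_cos_two_pi (n : ℕ) (hn : 0 < n) :
    ∫ x in (0:ℝ)..1, Real.cos (2*(n:ℝ)*(π*x)) = 0 := by
  have hc : (2*(n:ℝ)*π) ≠ 0 := by positivity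
  have : ∀ x : ℝ, Real.cos (2*(n:ℝ)*(π*x)) = Real.cos ((2*(n:ℝ)*π) * x) := by
    intro x; ring_nf
  simp_rw [this]
  rw [intervalIntegral.integral_comp_mul_left Real.cos hc, mul_zero, mul_one, integral_cos]
  simp only [Real.sin_zero, sub_zero]
  have : (2*(n:ℝ)*π) = (2*n : ℕ) * π := by push_cast; ring
  rw [this, Real.sin_nat_mul_pi, smul_zero]

lemma integral_secG (k : ℕ) : ∫ x in (0:ℝ)..1, secG k (π*x) = (-1)^k := by
  induction k with
  | zero => simp [secG]
  | succ k ih =>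
    have h1 : IntervalIntegrable (fun x => 2 * Real.cos (2*((k:ℝ)+1)*(π*x))) volume 0 1 := by
      apply Continuous.intervalIntegrable; fun_prop
    have h2 : IntervalIntegrable (fun x => secG k (π*x)) volume 0 1 := by
      apply Continuous.intervalIntegrable
      exact (continuous_secG k).comp (by fun_prop)
    have : ∀ x : ℝ, secG (k+1) (π*x) = 2 * Real.cos (2*((k:ℝ)+1)*(π*x)) - secG k (π*x) := by
      intro x; rw [secG_succ]
    simp_rw [this]
    rw [intervalIntegral.integral_sub h1 h2, ih]
    have := integral_cos_two_pi (k+1) (Nat.succ_pos k)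
    push_cast at this
    rw [intervalIntegral.integral_const_mul]
    rw [this]
    ring


lemma euler_hasSum (m : ℕ) (hm : 0 < m) {x : ℝ} (hx : x ∈ Set.Icc (0:ℝ) 1) :
    HasSum (fun k : ℕ => ((-1:ℝ)^m * (4 * ((2*m-1).factorial:ℝ) / π^(2*m))) *
      (1/((2*(k:ℝ)+1)^(2*m)) * Real.cos ((2*(k:ℝ)+1)*(π*x))))
      (eulerPoly (2*m-1) x) := by
  obtain ⟨x0, x1⟩ := hx
  have hx1 : (x+1)/2 ∈ Set.Icc (0:ℝ) 1 := by constructor <;> [linarith; linarith]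
  have hx2 : x/2 ∈ Set.Icc (0:ℝ) 1 := by constructor <;> [linarith; linarith]
  have h1 := hasSum_one_div_nat_pow_mul_cos hm.ne' hx1
  have h2 := hasSum_one_div_nat_pow_mul_cos hm.ne' hx2
  have h := h1.sub h2
  set C : ℝ := (-1 : ℝ) ^ (m + 1) * (2 * π) ^ (2 * m) / 2 / (2 * m).factorial with hC
  set E1 : ℝ := ((Polynomial.bernoulli (2*m)).map (algebraMap ℚ ℝ)).eval ((x+1)/2) with hE1
  set E2 : ℝ := ((Polynomial.bernoulli (2*m)).map (algebraMap ℚ ℝ)).eval (x/2) with hE2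
  set f : ℕ → ℝ := fun n => 1 / (n : ℝ) ^ (2 * m) * Real.cos (2 * π * n * ((x+1)/2))
    - 1 / (n : ℝ) ^ (2 * m) * Real.cos (2 * π * n * (x/2)) with hf
  have hinj : Function.Injective (fun k : ℕ => 2*k+1) := by
    intro a b hab
    simp only at hab
    omega
  have h0 : ∀ n ∉ Set.range (fun k : ℕ => 2*k+1), f n = 0 := by
    intro n hn
    have : Even n := by
      rcases Nat.even_or_odd n with he | ho
      · exact he
      · obtain ⟨t, rfl⟩ := ho
        exact absurd ⟨t, rfl⟩ hn
    obtain ⟨t, rfl⟩ := this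
    have harg : 2 * π * ((t+t : ℕ):ℝ) * ((x+1)/2) = 2 * π * ((t+t : ℕ):ℝ) * (x/2) + t * (2*π) := by
      push_cast; ring
    simp only [hf, harg, Real.cos_add_nat_mul_two_pi, sub_self]
  have hodd : HasSum (f ∘ (fun k : ℕ => 2*k+1)) (C * E1 - C * E2) :=
    (Function.Injective.hasSum_iff hinj h0).mpr h
  have hval : ∀ k : ℕ, (f ∘ (fun k : ℕ => 2*k+1)) k
      = -2 * (1/((2*(k:ℝ)+1)^(2*m)) * Real.cos ((2*(k:ℝ)+1)*(π*x))) := by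
    intro k
    have ha1 : 2 * π * ((2*k+1 : ℕ):ℝ) * ((x+1)/2)
        = (2*(k:ℝ)+1)*(π*x) + (2*k+1 : ℕ) * π := by push_cast; ring
    have ha2 : 2 * π * ((2*k+1 : ℕ):ℝ) * (x/2) = (2*(k:ℝ)+1)*(π*x) := by push_cast; ring
    simp only [hf, Function.comp_apply, ha1, ha2, Real.cos_add_nat_mul_pi]
    have : ((-1:ℝ)) ^ (2*k+1) = -1 := Odd.neg_one_pow ⟨k, by ring⟩
    rw [this]
    push_cast
    ring
  -- now multiply by r
  set c : ℝ := (-1:ℝ)^m * (4 * ((2*m-1).factorial:ℝ) / π^(2*m)) with hc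
  have hr := hodd.mul_left (c / (-2))
  have hfun : (fun k => c / (-2) * (f ∘ (fun k : ℕ => 2*k+1)) k)
      = fun k : ℕ => c * (1/((2*(k:ℝ)+1)^(2*m)) * Real.cos ((2*(k:ℝ)+1)*(π*x))) := by
    funext k
    rw [hval k]
    ring
  rw [hfun] at hr
  convert hr using 1
  · rfl
  -- sum equality
  have e3 : (2*m-1) + 1 = 2*m := by omega
  have hm2 : ((2*m-1 : ℕ):ℝ) + 1 = ((2*m : ℕ):ℝ) := by
    push_cast [Nat.cast_sub (by omega : 1 ≤ 2*m)]; ring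
  rw [eulerPoly, e3, hm2, ← hE1, ← hE2]
  have hπ : (π : ℝ) ≠ 0 := Real.pi_ne_zero
  have hfacne : (((2*m-1).factorial : ℕ) : ℝ) ≠ 0 := by positivity
  have hmne : ((2*m : ℕ) : ℝ) ≠ 0 := by positivity
  have hfac : (((2*m).factorial : ℕ) : ℝ) = ((2*m : ℕ):ℝ) * (((2*m-1).factorial : ℕ):ℝ) := by
    rw [show 2*m = (2*m-1) + 1 from by omega, Nat.factorial_succ]
    push_cast
    ring_nf
  have hsgn : ((-1:ℝ)^m) * ((-1:ℝ)^(m+1)) = -1 := by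
    rw [← pow_add]; exact Odd.neg_one_pow ⟨m, by ring⟩
  have key : (2:ℝ)^(2*m) / ((2*m : ℕ):ℝ) = c / -2 * C := by
    have step : c / -2 * C = ((-1:ℝ)^m * (-1:ℝ)^(m+1)) *
        ((4 * (((2*m-1).factorial : ℕ):ℝ) / π^(2*m)) / (-2)
          * ((2:ℝ)^(2*m) * π^(2*m) / 2 / (((2*m).factorial : ℕ):ℝ))) := by
      rw [hc, hC, mul_pow]; ring
    rw [step, hsgn, hfac]
    field_simp
    ring
  rw [key]
  ring


lemma hasSum_pair {f : ℕ → ℝ} {S : ℝ} (h : HasSum f S) :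
    HasSum (fun j => f (2*j) + f (2*j+1)) S := by
  have he : Summable (fun j => f (2*j)) :=
    h.summable.comp_injective (fun a b hab => by omega)
  have ho : Summable (fun j => f (2*j+1)) :=
    h.summable.comp_injective (fun a b hab => by omega)
  have hu : S = (∑' j, f (2*j)) + (∑' j, f (2*j+1)) :=
    h.unique (he.hasSum.even_add_odd ho.hasSum)
  simpa [← hu] using he.hasSum.add ho.hasSum

lemma diff_pow_le (p : ℕ) (hp : 0 < p) (A B : ℝ) (hA : 1 ≤ A) (hAB : A ≤ B) :
    1/A^p - 1/B^p ≤ p * (B - A) / A^(p+1) := by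
  have hA0 : (0:ℝ) < A := by linarith
  have hB0 : (0:ℝ) < B := by linarith
  have hB1 : (1:ℝ) ≤ B := by linarith
  have key : B^p - A^p ≤ p * B^(p-1) * (B - A) := by
    have hgeom : (∑ i ∈ Finset.range p, B ^ i * A ^ (p - 1 - i)) * (B - A) = B ^ p - A ^ p :=
      geom_sum₂_mul B A p
    rw [← hgeom]
    have hsum : (∑ i ∈ Finset.range p, B ^ i * A ^ (p - 1 - i)) ≤ p * B^(p-1) := by
      calc (∑ i ∈ Finset.range p, B ^ i * A ^ (p - 1 - i))
          ≤ ∑ _i ∈ Finset.range p, B^(p-1) := by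
            apply Finset.sum_le_sum
            intro i hi
            simp only [Finset.mem_range] at hi
            calc B ^ i * A ^ (p - 1 - i) ≤ B ^ i * B ^ (p - 1 - i) :=
                  mul_le_mul_of_nonneg_left (pow_le_pow_left₀ (by linarith) hAB _) (by positivity)
              _ = B ^ (i + (p-1-i)) := (pow_add B i _).symm
              _ ≤ B ^ (p-1) := pow_le_pow_right₀ hB1 (by omega)
        _ = p * B^(p-1) := by rw [Finset.sum_const, Finset.card_range]; push_cast; ring
    calc (∑ i ∈ Finset.range p, B ^ i * A ^ (p - 1 - i)) * (B - A)
        ≤ (p * B^(p-1)) * (B - A) := mul_le_mul_of_nonneg_right hsum (by linarith)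
      _ = p * B^(p-1) * (B - A) := by ring
  have hBpow : B^p = B^(p-1) * B := by
    rw [← pow_succ]; congr 1; omega
  calc 1/A^p - 1/B^p = (B^p - A^p)/(A^p * B^p) := by
        field_simp
    _ ≤ (p * B^(p-1) * (B-A))/(A^p * B^p) := by gcongr
    _ = (p * (B-A)) / (A^p * B) := by
        rw [hBpow]
        have hBp1 : B^(p-1) ≠ 0 := by positivity
        field_simp
    _ ≤ (p * (B-A)) / (A^p * A) := by
        have hnum : (0:ℝ) ≤ p * (B-A) := mul_nonneg (Nat.cast_nonneg p) (by linarith)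
        apply div_le_div_of_nonneg_left hnum (by positivity)
        gcongr
    _ = p * (B-A)/A^(p+1) := by rw [pow_succ]

lemma summable_inv_odd_pow (p : ℕ) (hp : 2 ≤ p) :
    Summable (fun k : ℕ => 1/((2*(k:ℝ)+1)^p)) := by
  have base : Summable (fun k : ℕ => 1/((k:ℝ)+1)^2) := by
    have h := (summable_nat_add_iff 1).mpr (Real.summable_one_div_nat_pow.mpr one_lt_two)
    refine h.congr fun n => ?_
    push_cast
    ring
  refine Summable.of_nonneg_of_le (fun k => by positivity) (fun k => ?_) base
  have h1 : ((k:ℝ)+1)^2 ≤ (2*(k:ℝ)+1)^2 := by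
    have : (0:ℝ) ≤ (k:ℝ) := Nat.cast_nonneg k
    nlinarith
  have h2 : (2*(k:ℝ)+1)^2 ≤ (2*(k:ℝ)+1)^p := by
    apply pow_le_pow_right₀ (by linarith [Nat.cast_nonneg (α := ℝ) k]) hp
  have h3 : (0:ℝ) < ((k:ℝ)+1)^2 := by positivity
  apply one_div_le_one_div_of_le h3
  linarith



theorem integral_sec_mul_eulerPoly (m : ℕ) (hm : 0 < m) :
    ∫ x in (0:ℝ)..1, (1 / Real.cos (Real.pi * x)) * eulerPoly (2 * m - 1) x =
      (-1 : ℝ) ^ m * (4 * (2 * m - 1).factorial / Real.pi ^ (2 * m)) *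
        dirichletBeta (2 * m) := by
  set c : ℝ := (-1:ℝ)^m * (4 * ((2*m-1).factorial:ℝ) / π^(2*m)) with hc
  set a : ℕ → ℝ := fun k => 1/((2*(k:ℝ)+1)^(2*m)) with ha
  set F : ℝ → ℝ := fun x => (1 / Real.cos (π * x)) * eulerPoly (2 * m - 1) x with hF
  set Q : ℕ → ℝ → ℝ := fun j x => c * ((a (2*j) - a (2*j+1)) * secG (2*j) (π*x)
      + 2 * a (2*j+1) * Real.cos (2 * (((2*j : ℕ) : ℝ) + 1) * (π*x))) with hQ
  -- pointwise convergence
  have hQsum : ∀ x ∈ Set.Ioc (0:ℝ) 1, x ≠ 1/2 → HasSum (fun j => Q j x) (F x) := by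
    intro x hx hne
    have hπ := Real.pi_pos
    have hcos : Real.cos (π * x) ≠ 0 := by
      intro h0
      obtain ⟨k, hk⟩ := Real.cos_eq_zero_iff.mp h0
      have hxk : x = k + 1/2 := by
        have : π * x = (2 * (k:ℝ) + 1) * π / 2 := hk
        field_simp at this
        nlinarith [this]
      have hk1 : ((-1:ℤ):ℝ) < k := by push_cast; linarith [hx.1]
      have hk2 : ((k:ℤ):ℝ) < 1 := by linarith [hx.2]
      have : k = 0 := by
        have a1 : (-1:ℤ) < k := by exact_mod_cast hk1
        have a2 : k < 1 := by exact_mod_cast hk2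
        omega
      rw [this] at hxk
      simp at hxk
      exact hne (by linarith)
    have hE := euler_hasSum m hm (Set.mem_Icc.mpr ⟨hx.1.le, hx.2⟩)
    have hsec := hE.mul_left (1 / Real.cos (π * x))
    have hfun : (fun k : ℕ => (1 / Real.cos (π * x)) *
          (((-1:ℝ)^m * (4 * ((2*m-1).factorial:ℝ) / π^(2*m))) *
            (1/((2*(k:ℝ)+1)^(2*m)) * Real.cos ((2*(k:ℝ)+1)*(π*x)))))
        = fun k : ℕ => c * (a k * secG k (π*x)) := by
      funext k
      rw [cos_eq_cos_mul_secG k (π*x), ha, hc]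
      field_simp
    rw [hfun] at hsec
    have hp := hasSum_pair hsec
    have hfun2 : (fun j => c * (a (2*j) * secG (2*j) (π*x)) + c * (a (2*j+1) * secG (2*j+1) (π*x)))
        = fun j => Q j x := by
      funext j
      rw [secG_succ (2*j) (π*x), hQ]
      ring
    rwa [hfun2] at hp
  -- integrability
  have hQcont : ∀ j, Continuous (Q j) := by
    intro j
    rw [hQ]
    apply continuous_const.mul
    apply Continuous.add
    · exact continuous_const.mul ((continuous_secG (2*j)).comp (continuous_const.mul continuous_id))
    · exact continuous_const.mul (Real.continuous_cos.comp (by fun_prop))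
  have hQint : ∀ j, Integrable (Q j) (volume.restrict (Set.Ioc (0:ℝ) 1)) := by
    intro j
    exact ((hQcont j).integrableOn_Icc.mono_set Set.Ioc_subset_Icc_self)
  -- norm bounds
  have hapos : ∀ k, 0 < a k := by
    intro k; rw [ha]; positivity
  have hamono : ∀ j : ℕ, a (2*j+1) ≤ a (2*j) := by
    intro j
    have e1 : a (2*j) = 1/(2*((2*j:ℕ):ℝ)+1)^(2*m) := by rw [ha]
    have e2 : a (2*j+1) = 1/(2*((2*j+1:ℕ):ℝ)+1)^(2*m) := by rw [ha]
    rw [e1, e2]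
    apply one_div_le_one_div_of_le (by positivity)
    apply pow_le_pow_left₀ (by positivity) (by push_cast; linarith) 
  set u : ℕ → ℝ := fun j => |c| * ((a (2*j) - a (2*j+1)) * (2*((2*j:ℕ):ℝ)+1) + 2 * a (2*j+1)) with hu
  have hbound : ∀ j x, ‖Q j x‖ ≤ u j := by
    intro j x
    rw [hQ, hu]
    simp only [norm_mul, Real.norm_eq_abs]
    apply mul_le_mul_of_nonneg_left _ (abs_nonneg c)
    have h1 : |(a (2*j) - a (2*j+1)) * secG (2*j) (π*x)| ≤ (a (2*j) - a (2*j+1)) * (2*((2*j:ℕ):ℝ)+1) := by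
      rw [abs_mul]
      apply mul_le_mul
      · rw [abs_of_nonneg (by linarith [hamono j])]
      · exact abs_secG_le (2*j) (π*x)
      · exact abs_nonneg _
      · linarith [hamono j]
    have h2 : |2 * a (2*j+1) * Real.cos (2 * (((2*j : ℕ) : ℝ) + 1) * (π*x))| ≤ 2 * a (2*j+1) := by
      rw [abs_mul, abs_of_nonneg (by linarith [hapos (2*j+1)] : (0:ℝ) ≤ 2 * a (2*j+1))]
      nlinarith [Real.abs_cos_le_one (2 * (((2*j : ℕ) : ℝ) + 1) * (π*x)), hapos (2*j+1)]
    calc |(a (2*j) - a (2*j+1)) * secG (2*j) (π*x) + 2 * a (2*j+1) * Real.cos (2 * (((2*j : ℕ) : ℝ) + 1) * (π*x))|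
        ≤ |(a (2*j) - a (2*j+1)) * secG (2*j) (π*x)| + |2 * a (2*j+1) * Real.cos (2 * (((2*j : ℕ) : ℝ) + 1) * (π*x))| :=
          abs_add_le _ _
      _ ≤ _ := add_le_add h1 h2
  -- summability of the bounds
  have hu_sum : Summable u := by
    rw [hu]
    apply Summable.mul_left
    apply Summable.add
    · -- (a (2j) - a (2j+1)) * (4j+1)
      have base : Summable (fun j : ℕ => (4*(m:ℝ)) * (1/((j:ℝ)+1)^2)) := by
        apply Summable.mul_left
        have h := (summable_nat_add_iff 1).mpr (Real.summable_one_div_nat_pow.mpr one_lt_two)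
        refine h.congr fun n => ?_
        push_cast
        ring
      refine Summable.of_nonneg_of_le (fun j => ?_) (fun j => ?_) base
      · have := hamono j
        have := abs_nonneg (secG (2*j) (π*1))
        nlinarith [hamono j, Nat.cast_nonneg (α := ℝ) (2*j)]
      · set A : ℝ := 2*((2*j:ℕ):ℝ)+1 with hA
        set B : ℝ := 2*((2*j+1:ℕ):ℝ)+1 with hB
        have hA1 : 1 ≤ A := by rw [hA]; push_cast; linarith [Nat.cast_nonneg (α := ℝ) j]
        have hAB : A ≤ B := by rw [hA, hB]; push_cast; linarith
        have hdiff : a (2*j) - a (2*j+1) ≤ (2*(m:ℝ)) * (B - A) / A^(2*m+1) := by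
          have h := diff_pow_le (2*m) (by omega) A B hA1 hAB
          have e1 : a (2*j) = 1/A^(2*m) := by rw [ha, hA]
          have e2 : a (2*j+1) = 1/B^(2*m) := by rw [ha, hB]
          rw [e1, e2]
          calc 1/A^(2*m) - 1/B^(2*m) ≤ ((2*m : ℕ):ℝ) * (B - A) / A^(2*m+1) := h
            _ = (2*(m:ℝ)) * (B - A) / A^(2*m+1) := by push_cast; ring
        have hBA : B - A = 2 := by rw [hA, hB]; push_cast; ring
        have hj1A : (j:ℝ)+1 ≤ A := by rw [hA]; push_cast; linarith [Nat.cast_nonneg (α := ℝ) j]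
        have hApow : ((j:ℝ)+1)^2 ≤ A^2 := by nlinarith [Nat.cast_nonneg (α := ℝ) j]
        have hApow2 : A^2 ≤ A^(2*m) := pow_le_pow_right₀ hA1 (by omega)
        have hA0 : (0:ℝ) < A := by linarith
        calc (a (2*j) - a (2*j+1)) * A ≤ ((2*(m:ℝ)) * (B - A) / A^(2*m+1)) * A := by
              apply mul_le_mul_of_nonneg_right hdiff (by linarith)
          _ = (4*m) / A^(2*m) := by
              rw [hBA, pow_succ]
              field_simp
              ring
          _ ≤ (4*m) / ((j:ℝ)+1)^2 := by
              apply div_le_div_of_nonneg_left (by positivity) (by positivity)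
              calc ((j:ℝ)+1)^2 ≤ A^2 := hApow
                _ ≤ A^(2*m) := hApow2
          _ = (4*(m:ℝ)) * (1/((j:ℝ)+1)^2) := by ring
    · have : Summable (fun j : ℕ => a (2*j+1)) :=
        (summable_inv_odd_pow (2*m) (by omega)).comp_injective (fun x y hxy => by omega)
      simpa using this.mul_left 2
  -- interchange
  have hsummable : Summable (fun j => ∫ x, ‖Q j x‖ ∂(volume.restrict (Set.Ioc (0:ℝ) 1))) := by
    refine Summable.of_nonneg_of_le (fun j => integral_nonneg (fun x => norm_nonneg _)) (fun j => ?_) hu_sum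
    have hle : ∫ x, ‖Q j x‖ ∂(volume.restrict (Set.Ioc (0:ℝ) 1)) ≤ ∫ _x in Set.Ioc (0:ℝ) 1, u j := by
      apply setIntegral_mono_on (hQint j).norm
        (integrableOn_const (by rw [Real.volume_Ioc]; simp))
        measurableSet_Ioc (fun x _ => hbound j x)
    calc ∫ x, ‖Q j x‖ ∂(volume.restrict (Set.Ioc (0:ℝ) 1)) ≤ ∫ _x in Set.Ioc (0:ℝ) 1, u j := hle
      _ = u j := by rw [setIntegral_const, Real.volume_real_Ioc]; norm_num
  have hinter := MeasureTheory.hasSum_integral_of_summable_integral_norm hQint hsummable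
  -- ae equality of the tsum with F
  have hae : (fun x => ∑' j, Q j x) =ᵐ[volume.restrict (Set.Ioc (0:ℝ) 1)] F := by
    have h1 : ∀ᵐ x ∂(volume.restrict (Set.Ioc (0:ℝ) 1)), x ∈ Set.Ioc (0:ℝ) 1 :=
      ae_restrict_mem measurableSet_Ioc
    have h2 : ∀ᵐ x ∂(volume.restrict (Set.Ioc (0:ℝ) 1)), x ≠ 1/2 := by
      refine ae_iff.mpr ?_
      have hset : {x : ℝ | ¬ x ≠ 1/2} = {(1/2 : ℝ)} := by ext y; simp
      rw [hset]
      exact le_antisymm (le_trans (Measure.le_iff'.mp Measure.restrict_le_self _) (by simp)) (zero_le)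
    filter_upwards [h1, h2] with x hx hne
    exact (hQsum x hx hne).tsum_eq
  rw [integral_congr_ae hae] at hinter
  -- value of each integral
  have hQint_val : ∀ j : ℕ, (∫ x, Q j x ∂(volume.restrict (Set.Ioc (0:ℝ) 1))) = c * (a (2*j) - a (2*j+1)) := by
    intro j
    have : (∫ x, Q j x ∂(volume.restrict (Set.Ioc (0:ℝ) 1))) = ∫ x in (0:ℝ)..1, Q j x :=
      (intervalIntegral.integral_of_le zero_le_one).symm
    rw [this, hQ]
    have h1 : IntervalIntegrable (fun x => (a (2*j) - a (2*j+1)) * secG (2*j) (π*x)) volume 0 1 := by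
      apply Continuous.intervalIntegrable
      exact continuous_const.mul ((continuous_secG (2*j)).comp (by fun_prop))
    have h2 : IntervalIntegrable (fun x => 2 * a (2*j+1) * Real.cos (2 * (((2*j : ℕ) : ℝ) + 1) * (π*x))) volume 0 1 := by
      apply Continuous.intervalIntegrable
      exact continuous_const.mul (Real.continuous_cos.comp (by fun_prop))
    rw [intervalIntegral.integral_const_mul, intervalIntegral.integral_add h1 h2,
      intervalIntegral.integral_const_mul, intervalIntegral.integral_const_mul,
      integral_secG (2*j)]
    have hz := integral_cos_two_pi (2*j+1) (by omega)
    have hcast : (fun x : ℝ => Real.cos (2*((2*j+1:ℕ):ℝ)*(π*x)))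
        = fun x : ℝ => Real.cos (2 * (((2*j : ℕ) : ℝ) + 1) * (π*x)) := by
      funext x; push_cast; ring_nf
    rw [hcast] at hz
    rw [hz]
    rw [Even.neg_one_pow ⟨j, by ring⟩]
    ring
  have hfun3 : (fun j => ∫ x, Q j x ∂(volume.restrict (Set.Ioc (0:ℝ) 1)))
      = fun j => c * (a (2*j) - a (2*j+1)) := funext hQint_val
  rw [hfun3] at hinter
  -- beta series side
  have hβsummable : Summable (fun n : ℕ => (-1:ℝ)^n / (2*(n:ℝ)+1)^(2*m)) := by
    apply Summable.of_norm
    refine (summable_inv_odd_pow (2*m) (by omega)).congr fun n => ?_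
    rw [Real.norm_eq_abs, abs_div, abs_pow, abs_pow, abs_neg, abs_one, one_pow,
      abs_of_nonneg (by positivity : (0:ℝ) ≤ 2*(n:ℝ)+1)]
  have hβ : HasSum (fun n : ℕ => (-1:ℝ)^n / (2*(n:ℝ)+1)^(2*m)) (dirichletBeta (2*m)) := by
    rw [dirichletBeta]
    exact hβsummable.hasSum
  have hpβ := (hasSum_pair hβ).mul_left c
  have hfun4 : (fun j : ℕ => c * ((-1:ℝ)^(2*j) / (2*((2*j:ℕ):ℝ)+1)^(2*m)
        + (-1:ℝ)^(2*j+1) / (2*((2*j+1:ℕ):ℝ)+1)^(2*m)))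
      = fun j => c * (a (2*j) - a (2*j+1)) := by
    funext j
    rw [Even.neg_one_pow ⟨j, by ring⟩, Odd.neg_one_pow ⟨j, rfl⟩, ha]
    push_cast
    ring
  rw [hfun4] at hpβ
  have hmain := hpβ.unique hinter
  rw [intervalIntegral.integral_of_le zero_le_one]
  exact hmain.symm
end

section
/- For integers p, q with q ≥ 1 and 1 ≤ p ≤ q, and for every positive integer m, the Euler polynomial at the rational argument p/q satisfies E_m(p/q) = (4·m!/(2qπ)^{m+1}) ∑_{r=1}^{q} sin((2r-1)πp/q - mπ/2) ζ(m+1, (2r-1)/(2q)), where ζ(s,a) = ∑_{n=0}^∞ 1/(n+a)^s is the Hurwitz zeta function. -/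
/-- The Hurwitz zeta function `ζ(s,a) = ∑_{n=0}^∞ 1/(n+a)^s` at integer arguments
`s = m+1 ≥ 2`, where it is given by an absolutely convergent series. -/
noncomputable def hurwitzZetaNat (s : ℕ) (a : ℝ) : ℝ := ∑' n : ℕ, 1 / ((n : ℝ) + a) ^ s

open Real

lemma hasSum_hurwitzZetaNat {s : ℕ} (hs : 2 ≤ s) {a : ℝ} (ha : 0 < a) :
    HasSum (fun n : ℕ => 1 / ((n : ℝ) + a) ^ s) (hurwitzZetaNat s a) := by
  have h1 : Summable (fun n : ℕ => 1 / ((n : ℝ) + 1) ^ s) := by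
    have h := (summable_nat_add_iff 1).mpr (summable_one_div_nat_pow.mpr (by omega : 1 < s))
    refine h.congr fun n => ?_
    push_cast
    ring
  have hsum : Summable (fun n : ℕ => 1 / ((n : ℝ) + a) ^ s) := by
    rw [← summable_nat_add_iff 1]
    refine h1.of_nonneg_of_le (fun n => by positivity) fun n => ?_
    apply one_div_le_one_div_of_le (by positivity)
    apply pow_le_pow_left₀ (by positivity)
    push_cast
    linarith
  exact hsum.hasSum

lemma eulerPoly_hasSum {x : ℝ} (hx : x ∈ Set.Icc (0:ℝ) 1) {m : ℕ} (hm : 0 < m) :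
    HasSum (fun n : ℕ => Real.sin ((2*(n:ℝ)+1)*π*x - m*π/2) / (2*(n:ℝ)+1)^(m+1))
      (π^(m+1)/(4*(m.factorial : ℝ)) * eulerPoly m x) := by
  have hx1 : (x+1)/2 ∈ Set.Icc (0:ℝ) 1 := ⟨by linarith [hx.1], by linarith [hx.2]⟩
  have hx2 : x/2 ∈ Set.Icc (0:ℝ) 1 := ⟨by linarith [hx.1], by linarith [hx.2]⟩
  have hinj : Function.Injective (fun n : ℕ => 2*n+1) := by
    intro a b h
    dsimp only at h
    omega
  have hcos : ∀ j : ℕ, Real.cos ((j:ℝ)*π) = (-1:ℝ)^j := fun j => by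
    simpa using Real.cos_nat_mul_pi_sub 0 j
  have hπ : π ≠ 0 := Real.pi_ne_zero
  rcases Nat.even_or_odd m with he | ho
  · -- m = 2*k
    obtain ⟨k, hk⟩ := he
    have hk2 : m = 2*k := by omega
    subst hk2
    have hk0 : k ≠ 0 := by omega
    have H := (hasSum_one_div_nat_pow_mul_sin hk0 hx1).sub
      (hasSum_one_div_nat_pow_mul_sin hk0 hx2)
    have hvan : ∀ c ∉ Set.range (fun n : ℕ => 2*n+1),
        1/((c:ℕ):ℝ)^(2*k+1) * Real.sin (2*π*(c:ℝ)*((x+1)/2))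
          - 1/((c:ℕ):ℝ)^(2*k+1) * Real.sin (2*π*(c:ℝ)*(x/2)) = 0 := by
      intro c hc
      obtain ⟨t, rfl⟩ : ∃ t, c = 2*t := by
        rcases Nat.even_or_odd c with h | ⟨t, ht⟩
        · obtain ⟨t, ht⟩ := h; exact ⟨t, by omega⟩
        · exact absurd ⟨t, by dsimp only; omega⟩ hc
      have e1 : 2*π*((2*t : ℕ):ℝ)*((x+1)/2) = 2*π*(t:ℝ)*x + (t:ℕ)*(2*π) := by
        push_cast; ring
      have e2 : 2*π*((2*t : ℕ):ℝ)*(x/2) = 2*π*(t:ℝ)*x := by push_cast; ring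
      rw [e1, e2, Real.sin_add_nat_mul_two_pi, sub_self]
    have H2 := (hinj.hasSum_iff hvan).mpr H
    have H3 := H2.mul_left ((-1:ℝ)^(k+1)/2)
    convert H3 using 1
    · rfl
    · funext n
      simp only [Function.comp]
      have e1 : 2*π*((2*n+1 : ℕ):ℝ)*((x+1)/2) = ((2*(n:ℝ)+1)*π*x + π) + (n:ℕ)*(2*π) := by
        push_cast; ring
      have e2 : 2*π*((2*n+1 : ℕ):ℝ)*(x/2) = (2*(n:ℝ)+1)*π*x := by push_cast; ring
      have e3 : (2*(n:ℝ)+1)*π*x - ((2*k : ℕ):ℝ)*π/2 = (2*(n:ℝ)+1)*π*x - (k:ℝ)*π := by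
        push_cast; ring
      have e4 : ((2*n+1 : ℕ):ℝ) = 2*(n:ℝ)+1 := by push_cast; ring
      rw [e1, e2, e3, e4, Real.sin_add_nat_mul_two_pi, Real.sin_add_pi, Real.sin_sub,
        Real.sin_nat_mul_pi, hcos k, pow_succ]
      ring
    · rw [eulerPoly]
      have hfac : (((2*k+1).factorial : ℕ) : ℝ) = (2*(k:ℝ)+1) * ((2*k).factorial : ℝ) := by
        rw [Nat.factorial_succ]; push_cast; ring
      have hne1 : ((2*k).factorial : ℝ) ≠ 0 := Nat.cast_ne_zero.mpr (Nat.factorial_ne_zero _)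
      have hne2 : (2*(k:ℝ)+1) ≠ 0 := by positivity
      have hcast : (((2*k : ℕ):ℝ) + 1) = 2*(k:ℝ)+1 := by push_cast; ring
      rw [hfac, hcast]
      rcases Nat.even_or_odd (k+1) with hpar | hpar
      · rw [hpar.neg_one_pow]; field_simp; ring
      · rw [hpar.neg_one_pow]; field_simp; ring
  · -- m = 2*k+1
    obtain ⟨k, hk⟩ := ho
    subst hk
    have H := (hasSum_one_div_nat_pow_mul_cos (Nat.succ_ne_zero k) hx1).sub
      (hasSum_one_div_nat_pow_mul_cos (Nat.succ_ne_zero k) hx2)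
    rw [show 2*(k+1) = 2*k+1+1 by omega] at H
    have hvan : ∀ c ∉ Set.range (fun n : ℕ => 2*n+1),
        1/((c:ℕ):ℝ)^(2*k+1+1) * Real.cos (2*π*(c:ℝ)*((x+1)/2))
          - 1/((c:ℕ):ℝ)^(2*k+1+1) * Real.cos (2*π*(c:ℝ)*(x/2)) = 0 := by
      intro c hc
      obtain ⟨t, rfl⟩ : ∃ t, c = 2*t := by
        rcases Nat.even_or_odd c with h | ⟨t, ht⟩
        · obtain ⟨t, ht⟩ := h; exact ⟨t, by omega⟩
        · exact absurd ⟨t, by dsimp only; omega⟩ hc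
      have e1 : 2*π*((2*t : ℕ):ℝ)*((x+1)/2) = 2*π*(t:ℝ)*x + (t:ℕ)*(2*π) := by
        push_cast; ring
      have e2 : 2*π*((2*t : ℕ):ℝ)*(x/2) = 2*π*(t:ℝ)*x := by push_cast; ring
      rw [e1, e2, Real.cos_add_nat_mul_two_pi, sub_self]
    have H2 := (hinj.hasSum_iff hvan).mpr H
    have H3 := H2.mul_left ((-1:ℝ)^k/2)
    convert H3 using 1
    · rfl
    · funext n
      simp only [Function.comp]
      have e1 : 2*π*((2*n+1 : ℕ):ℝ)*((x+1)/2) = ((2*(n:ℝ)+1)*π*x + π) + (n:ℕ)*(2*π) := by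
        push_cast; ring
      have e2 : 2*π*((2*n+1 : ℕ):ℝ)*(x/2) = (2*(n:ℝ)+1)*π*x := by push_cast; ring
      have e3 : (2*(n:ℝ)+1)*π*x - ((2*k+1 : ℕ):ℝ)*π/2
          = ((2*(n:ℝ)+1)*π*x - π/2) - (k:ℝ)*π := by push_cast; ring
      have e4 : ((2*n+1 : ℕ):ℝ) = 2*(n:ℝ)+1 := by push_cast; ring
      rw [e1, e2, e3, e4, Real.cos_add_nat_mul_two_pi, Real.cos_add_pi, Real.sin_sub,
        Real.sin_nat_mul_pi, hcos k, Real.sin_sub_pi_div_two]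
      ring
    · rw [eulerPoly]
      have hfac : (((2*k+1+1).factorial : ℕ) : ℝ)
          = (2*(k:ℝ)+1+1) * ((2*k+1).factorial : ℝ) := by
        rw [Nat.factorial_succ]; push_cast; ring
      have hne1 : ((2*k+1).factorial : ℝ) ≠ 0 := Nat.cast_ne_zero.mpr (Nat.factorial_ne_zero _)
      have hne2 : (2*(k:ℝ)+1+1) ≠ 0 := by positivity
      have hcast : (((2*k+1 : ℕ):ℝ) + 1) = 2*(k:ℝ)+1+1 := by push_cast; ring
      have hsign : (-1:ℝ)^(k+1+1) = (-1:ℝ)^k := by rw [pow_succ, pow_succ]; ring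
      rw [hfac, hcast, hsign]
      rcases Nat.even_or_odd k with hpar | hpar
      · rw [hpar.neg_one_pow]; field_simp; ring
      · rw [hpar.neg_one_pow]; field_simp; ring

theorem eulerPoly_rational_arg (p q : ℕ) (hq : 1 ≤ q) (hp1 : 1 ≤ p) (hpq : p ≤ q)
    (m : ℕ) (hm : 0 < m) :
    eulerPoly m ((p : ℝ) / q) =
      (4 * m.factorial / (2 * q * Real.pi) ^ (m + 1)) *
        ∑ r ∈ Finset.Icc 1 q,
          Real.sin ((2 * r - 1) * Real.pi * p / q - m * Real.pi / 2) *
            hurwitzZetaNat (m + 1) ((2 * (r : ℝ) - 1) / (2 * q)) := by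
  haveI : NeZero q := ⟨by omega⟩
  have hq0 : (q:ℝ) ≠ 0 := Nat.cast_ne_zero.mpr (by omega)
  have hqpos : (0:ℝ) < q := by positivity
  have hx : (p:ℝ)/q ∈ Set.Icc (0:ℝ) 1 := by
    constructor
    · positivity
    · rw [div_le_one hqpos]; exact_mod_cast hpq
  have key := eulerPoly_hasSum hx hm
  let e : Fin q × ℕ ≃ ℕ := (Equiv.prodComm (Fin q) ℕ).trans (Nat.divModEquiv q).symm
  have He := e.hasSum_iff.mpr key
  set G : ℕ → ℝ := fun j => Real.sin ((2*(j:ℝ)+1)*π*(p:ℝ)/q - m*π/2)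
      * hurwitzZetaNat (m+1) ((2*(j:ℝ)+1)/(2*(q:ℝ))) / (2*(q:ℝ))^(m+1) with hG
  have hfib : ∀ r : Fin q, HasSum (fun d : ℕ =>
      Real.sin ((2*(((d*q + (r:ℕ) : ℕ)):ℝ)+1)*π*((p:ℝ)/q) - m*π/2)
        / (2*(((d*q + (r:ℕ) : ℕ)):ℝ)+1)^(m+1)) (G (r:ℕ)) := by
    intro r
    have ha : (0:ℝ) < (2*((r:ℕ):ℝ)+1)/(2*(q:ℝ)) := by positivity
    have hz := hasSum_hurwitzZetaNat (by omega : 2 ≤ m+1) ha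
    have H := (hz.mul_left (Real.sin ((2*((r:ℕ):ℝ)+1)*π*(p:ℝ)/q - m*π/2))).div_const
      ((2*(q:ℝ))^(m+1))
    convert H using 1
    · rfl
    funext d
    have harg : (2*(((d*q + (r:ℕ) : ℕ)):ℝ)+1)*π*((p:ℝ)/q) - m*π/2
        = ((2*((r:ℕ):ℝ)+1)*π*(p:ℝ)/q - m*π/2) + ((d*p : ℕ):ℝ)*(2*π) := by
      push_cast
      field_simp
      ring
    have hden : (2*(((d*q + (r:ℕ) : ℕ)):ℝ)+1)^(m+1)
        = (2*(q:ℝ))^(m+1) * ((d:ℝ) + (2*((r:ℕ):ℝ)+1)/(2*(q:ℝ)))^(m+1) := by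
      rw [← mul_pow]
      congr 1
      push_cast
      field_simp
      ring
    rw [harg, Real.sin_add_nat_mul_two_pi,
      show ∀ a b c : ℝ, a * (1/b)/c = a/(c*b) from fun a b c => by ring, hden]
  have Hg : HasSum (fun r : Fin q => G (r:ℕ))
      (π^(m+1)/(4*(m.factorial:ℝ)) * eulerPoly m ((p:ℝ)/q)) := He.prod_fiberwise hfib
  have hT : π^(m+1)/(4*(m.factorial:ℝ)) * eulerPoly m ((p:ℝ)/q) = ∑ r : Fin q, G (r:ℕ) :=
    Hg.unique (hasSum_fintype _)
  have h2q : ((2:ℝ)*(q:ℝ))^(m+1) ≠ 0 := by positivity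
  have hSsum : ∑ r ∈ Finset.Icc 1 q,
      Real.sin ((2 * r - 1) * Real.pi * p / q - m * Real.pi / 2) *
        hurwitzZetaNat (m + 1) ((2 * (r : ℝ) - 1) / (2 * q))
      = (2*(q:ℝ))^(m+1) * ∑ r : Fin q, G (r:ℕ) := by
    rw [Fin.sum_univ_eq_sum_range (fun j => G j) q, ← Finset.Ico_add_one_right_eq_Icc,
      Finset.sum_Ico_eq_sum_range]
    simp only [Nat.succ_sub_one, Nat.add_sub_cancel]
    rw [Finset.mul_sum]
    refine Finset.sum_congr rfl fun i _ => ?_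
    have harg1 : (2*((1+i : ℕ):ℝ) - 1) * Real.pi * (p:ℝ) / q - m*Real.pi/2
        = (2*(i:ℝ)+1)*π*(p:ℝ)/q - m*π/2 := by push_cast; ring
    have harg2 : (2*((1+i : ℕ):ℝ) - 1)/(2*(q:ℝ)) = (2*(i:ℝ)+1)/(2*(q:ℝ)) := by
      push_cast; ring
    rw [harg1, harg2, hG]
    field_simp
  rw [hSsum, ← hT]
  have hfac : (m.factorial : ℝ) ≠ 0 := Nat.cast_ne_zero.mpr (Nat.factorial_ne_zero _)
  have hπ : π ≠ 0 := Real.pi_ne_zero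
  rw [mul_pow (2*(q:ℝ)) π]
  field_simp
end
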